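/- Gradient orthogonality to rescaling orbits: let L : ℝ^{l×d} × ℝ^{e×l} → ℝ be differentiable at a parameter θ = (W¹, W²), and suppose L is invariant under all neuron rescalings, i.e. L(diag(α)·W¹, W²·diag(α)⁻¹) = L(W¹, W²) for every α ∈ ℝ^l with strictly positive entries. Then for every hidden-neuron index k ∈ {1,…,l}, ∑_{i=1}^{d} W¹_{ki} · (∂L/∂W¹_{ki})(θ) − ∑_{j=1}^{e} W²_{jk} · (∂L/∂W²_{jk})(θ) = 0. -/

import Mathlib

/-- Gradient orthogonality to rescaling orbits. If `L` is
differentiable at `θ = (W¹, W²)` and invariant under all neuron rescalings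
`(W¹, W²) ↦ (diag(α)·W¹, W²·diag(α)⁻¹)` (for `α` with strictly positive
entries), then for every hidden neuron `k`,
`∑ᵢ W¹_{ki} ∂L/∂W¹_{ki} − ∑ⱼ W²_{jk} ∂L/∂W²_{jk} = 0`. -/
theorem gradient_orthogonal_to_rescaling_orbit (l d e : ℕ)
    (L : ((Fin l → Fin d → ℝ) × (Fin e → Fin l → ℝ)) → ℝ)
    (W1 : Fin l → Fin d → ℝ) (W2 : Fin e → Fin l → ℝ)
    (hdiff : DifferentiableAt ℝ L (W1, W2))
    (hinv : ∀ (V1 : Fin l → Fin d → ℝ) (V2 : Fin e → Fin l → ℝ) (α : Fin l → ℝ),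
      (∀ k, 0 < α k) →
      L (fun k i => α k * V1 k i, fun j k => V2 j k * (α k)⁻¹) = L (V1, V2))
    (k : Fin l) :
    ∑ i, W1 k i * fderiv ℝ L (W1, W2) (Pi.single k (Pi.single i (1 : ℝ)), 0)
      - ∑ j, W2 j k * fderiv ℝ L (W1, W2) (0, Pi.single j (Pi.single k (1 : ℝ))) = 0 := by
  classical
  set φ := fderiv ℝ L (W1, W2) with hφ
  -- the tangent vector of the rescaling curve at t = 0
  set v1 : Fin l → Fin d → ℝ := fun k' i => if k' = k then W1 k i else 0 with hv1
  set v2 : Fin e → Fin l → ℝ := fun j k' => if k' = k then -W2 j k else 0 with hv2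
  -- the rescaling factor
  set a : ℝ → Fin l → ℝ := fun t k' => if k' = k then 1 + t else 1 with ha
  set g : ℝ → (Fin l → Fin d → ℝ) × (Fin e → Fin l → ℝ) :=
    fun t => (fun k' i => a t k' * W1 k' i, fun j k' => W2 j k' * (a t k')⁻¹) with hg
  have hg0 : g 0 = (W1, W2) := by
    simp only [hg, ha]
    refine Prod.ext ?_ ?_
    · funext x y; by_cases h : x = k <;> simp [h]
    · funext x y; by_cases h : y = k <;> simp [h]
  -- derivative of g at 0
  have hgd : HasDerivAt g (v1, v2) 0 := by
    refine HasDerivAt.prodMk ?_ ?_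
    · rw [hasDerivAt_pi]
      intro k'
      rw [hasDerivAt_pi]
      intro i
      by_cases h : k' = k
      · subst h
        simp only [ha, hv1, if_pos rfl]
        have : HasDerivAt (fun t : ℝ => (1 + t) * W1 k' i) (W1 k' i) 0 := by
          simpa using ((hasDerivAt_id (0:ℝ)).const_add 1).mul_const (W1 k' i)
        exact this
      · simp only [ha, hv1, if_neg h]
        exact hasDerivAt_const 0 _
    · rw [hasDerivAt_pi]
      intro j
      rw [hasDerivAt_pi]
      intro k'
      by_cases h : k' = k
      · subst h
        simp only [ha, hv2, if_pos rfl]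
        have h1 : HasDerivAt (fun t : ℝ => (1 + t)) 1 0 := by
          simpa using (hasDerivAt_id (0:ℝ)).const_add 1
        have h2 : HasDerivAt (fun t : ℝ => (1 + t)⁻¹) (-1) 0 := by
          have := h1.inv (by norm_num)
          exact (this.congr_deriv (by norm_num)).congr_of_eventuallyEq
            (Filter.Eventually.of_forall fun t => rfl)
        have := h2.const_mul (W2 j k')
        simpa [mul_comm] using this
      · simp only [ha, hv2, if_neg h]
        exact hasDerivAt_const 0 _
  -- L ∘ g is locally constant near 0
  have hconst : (fun t => L (g t)) =ᶠ[nhds (0:ℝ)] (fun _ => L (W1, W2)) := by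
    have : Set.Ioo (-1 : ℝ) 1 ∈ nhds (0:ℝ) := Ioo_mem_nhds (by norm_num) (by norm_num)
    filter_upwards [this] with t ht
    have hpos : ∀ k', 0 < a t k' := by
      intro k'
      by_cases h : k' = k <;> simp [ha, h]
      linarith [ht.1]
    exact hinv W1 W2 (a t) hpos
  have hLd : HasDerivAt (fun t => L (g t)) (φ (v1, v2)) 0 := by
    have hF : HasFDerivAt L φ (g 0) := hg0 ▸ hdiff.hasFDerivAt
    exact hF.comp_hasDerivAt 0 hgd
  have hzero : φ (v1, v2) = 0 := by
    have h0 : HasDerivAt (fun t => L (g t)) 0 0 :=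
      (hasDerivAt_const 0 (L (W1, W2))).congr_of_eventuallyEq hconst
    exact hLd.unique h0
  -- decompose (v1, v2) into basis vectors
  have hdecomp : (v1, v2) =
      (∑ i, W1 k i • ((Pi.single k (Pi.single i (1:ℝ)) : Fin l → Fin d → ℝ),
        (0 : Fin e → Fin l → ℝ)))
      + (∑ j, (-(W2 j k)) • ((0 : Fin l → Fin d → ℝ),
        (Pi.single j (Pi.single k (1:ℝ)) : Fin e → Fin l → ℝ))) := by
    refine Prod.ext ?_ ?_
    · simp only [Prod.fst_add, Prod.fst_sum, Prod.smul_mk, smul_zero, Finset.sum_const_zero,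
        add_zero]
      funext k' i'
      simp only [Finset.sum_apply, Pi.smul_apply, Pi.single_apply, smul_eq_mul]
      by_cases h : k' = k
      · subst h
        simp [hv1, ite_apply, Pi.single_apply, Finset.sum_ite_eq]
      · simp [hv1, h, Ne.symm h, ite_apply, Pi.single_apply]
    · simp only [Prod.snd_add, Prod.snd_sum, Prod.smul_mk, smul_zero, Finset.sum_const_zero,
        zero_add]
      funext j' k'
      simp only [Finset.sum_apply, Pi.smul_apply, Pi.single_apply, smul_eq_mul]
      by_cases h : k' = k
      · subst h
        simp [hv2, ite_apply, Pi.single_apply, Finset.sum_ite_eq]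
      · simp [hv2, h, Ne.symm h, ite_apply, Pi.single_apply]
  have := hzero
  rw [hdecomp] at this
  rw [map_add, map_sum, map_sum] at this
  simp only [map_smul, smul_eq_mul, neg_mul] at this
  rw [Finset.sum_neg_distrib] at this
  linarith [this]
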